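/- arXiv:2512.05260 — 2 statements merged into one kernel-verified Lean document; each statement's English description precedes it below -/
import Mathlib

section
/- The infinite series Σ_{k=1}^{∞} 2^k / (binom(2k,k) · 2k · (2k+1)) converges and equals 1 - π/4. -/
open intervalIntegral Real

lemma beta_nat (a b : ℕ) :
    ∫ x in (0:ℝ)..1, x ^ a * (1 - x) ^ b
      = (a.factorial * b.factorial : ℝ) / (a + b + 1).factorial := by
  induction b generalizing a with
  | zero =>
      rw [Nat.factorial_succ]; push_cast; simp [integral_pow]; rw [eq_div_iff (by positivity)]; field_simp
  | succ b ih =>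
      have key : ∫ x in (0:ℝ)..1,
          ((a+1 : ℝ) * (x ^ a * (1 - x) ^ (b+1)) - (b+1 : ℝ) * (x ^ (a+1) * (1 - x) ^ b)) = 0 := by
        have : ∀ x : ℝ, HasDerivAt (fun x : ℝ => x ^ (a+1) * (1 - x) ^ (b+1))
            ((a+1 : ℝ) * (x ^ a * (1 - x) ^ (b+1)) - (b+1 : ℝ) * (x ^ (a+1) * (1 - x) ^ b)) x := by
          intro x
          have h1 : HasDerivAt (fun x : ℝ => x ^ (a+1)) ((a+1 : ℝ) * x ^ a) x := by
            simpa using (hasDerivAt_pow (a+1) x)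
          have h2 : HasDerivAt (fun x : ℝ => (1 - x) ^ (b+1))
              (-((b+1 : ℝ) * (1 - x) ^ b)) x := by
            have := ((hasDerivAt_pow (b+1) (1 - x)).comp x
              ((hasDerivAt_id x).const_sub 1))
            simpa [mul_comm, mul_assoc, Function.comp_def] using this
          have := h1.mul h2
          refine this.congr_deriv ?_
          push_cast
          ring
        rw [integral_eq_sub_of_hasDerivAt (fun x _ => this x) ?_]
        · simp
        · apply Continuous.intervalIntegrable; continuity
      have h1 : IntervalIntegrable (fun x : ℝ => (a+1:ℝ) * (x ^ a * (1 - x) ^ (b+1))) MeasureTheory.volume 0 1 := by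
        apply Continuous.intervalIntegrable; continuity
      have h2 : IntervalIntegrable (fun x : ℝ => (b+1:ℝ) * (x ^ (a+1) * (1 - x) ^ b)) MeasureTheory.volume 0 1 := by
        apply Continuous.intervalIntegrable; continuity
      rw [integral_sub h1 h2, integral_const_mul, integral_const_mul, sub_eq_zero] at key
      have hne : (a + 1 : ℝ) ≠ 0 := by positivity
      have := ih (a+1)
      have heq : ∫ x in (0:ℝ)..1, x ^ a * (1 - x) ^ (b+1)
          = ((b+1 : ℝ) / (a+1)) * ((a+1).factorial * b.factorial / ((a+1) + b + 1).factorial) := by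
        rw [← this]
        field_simp at key ⊢
        linarith [key]
      rw [heq]
      rw [Nat.factorial_succ (a), Nat.factorial_succ b]
      have : ((a+1) + b + 1) = (a + (b+1) + 1) := by omega
      rw [this]
      push_cast
      field_simp
open intervalIntegral Real

lemma q_pos (x : ℝ) : 0 < 2*x^2 - 2*x + 1 := by nlinarith [sq_nonneg (2*x-1)]

lemma log_integral :
    ∫ x in (0:ℝ)..1, -(1/2) * Real.log (2*x^2 - 2*x + 1) = 1 - π/4 := by
  have hderiv : ∀ x : ℝ, HasDerivAt
      (fun x : ℝ => x - (1/2)*(x - 1/2) * Real.log (2*x^2 - 2*x + 1) - (1/2) * arctan (2*x - 1))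
      (-(1/2) * Real.log (2*x^2 - 2*x + 1)) x := by
    intro x
    have hq : HasDerivAt (fun x : ℝ => 2*x^2 - 2*x + 1) (4*x - 2) x := by
      have h := (((hasDerivAt_pow 2 x).const_mul 2).sub ((hasDerivAt_id x).const_mul 2)).add_const 1
      refine h.congr_deriv ?_; push_cast; ring
    have hlog : HasDerivAt (fun x : ℝ => Real.log (2*x^2 - 2*x + 1))
        ((4*x - 2) / (2*x^2 - 2*x + 1)) x := hq.log (q_pos x).ne'
    have hmul : HasDerivAt (fun x : ℝ => (1/2)*(x - 1/2) * Real.log (2*x^2 - 2*x + 1))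
        ((1/2) * Real.log (2*x^2 - 2*x + 1)
          + (1/2)*(x - 1/2) * ((4*x - 2) / (2*x^2 - 2*x + 1))) x := by
      have h1 : HasDerivAt (fun x : ℝ => (1/2)*(x - 1/2)) (1/2) x := by
        have := ((hasDerivAt_id x).sub_const (1/2)).const_mul (1/2:ℝ)
        exact this.congr_deriv (by norm_num)
      have := h1.mul hlog
      exact this.congr_deriv (by ring)
    have harctan : HasDerivAt (fun x : ℝ => (1/2) * arctan (2*x - 1))
        ((1/2) * (2 / (1 + (2*x - 1)^2))) x := by
      have hin : HasDerivAt (fun x : ℝ => 2*x - 1) 2 x := by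
        simpa using ((hasDerivAt_id x).const_mul 2).sub_const 1
      have := ((Real.hasDerivAt_arctan (2*x-1)).comp x hin).const_mul (1/2)
      exact this.congr_deriv (by ring)
    have := ((hasDerivAt_id x).sub hmul).sub harctan
    refine this.congr_deriv ?_
    have hq' : (2*x^2 - 2*x + 1) ≠ 0 := (q_pos x).ne'
    have h2q : 1 + (2*x - 1)^2 = 2*(2*x^2 - 2*x + 1) := by ring
    rw [h2q]
    have hq2 : 2 * x * (x - 1) + 1 ≠ 0 := ne_of_gt (by linarith [q_pos x])
    field_simp
    ring
  rw [integral_eq_sub_of_hasDerivAt (fun x _ => hderiv x) ?_]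
  · norm_num
    ring
  · apply Continuous.intervalIntegrable
    have hc : Continuous fun x : ℝ => Real.log (2*x^2 - 2*x + 1) :=
      (by fun_prop : Continuous fun x : ℝ => 2*x^2 - 2*x + 1).log fun x => (q_pos x).ne'
    fun_prop

open MeasureTheory

lemma y_bounds {x : ℝ} (hx : x ∈ Set.Ioc (0:ℝ) 1) :
    0 ≤ 2*x*(1-x) ∧ 2*x*(1-x) ≤ 1/2 := by
  obtain ⟨h1, h2⟩ := hx
  constructor
  · nlinarith
  · nlinarith [sq_nonneg (2*x - 1)]

lemma term_eq (k : ℕ) :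
    (2 : ℝ) ^ (k + 1) /
        ((Nat.choose (2 * (k + 1)) (k + 1) : ℝ) * (2 * ((k : ℝ) + 1)) *
          (2 * ((k : ℝ) + 1) + 1))
      = ∫ x in Set.Ioc (0:ℝ) 1, (2*x*(1-x))^(k+1) / (2*((k:ℝ)+1)) := by
  set n := k + 1 with hn
  have h1 : (∫ x in Set.Ioc (0:ℝ) 1, (2*x*(1-x))^n / (2*((k:ℝ)+1)))
      = ∫ x in (0:ℝ)..1, (2^n / (2*((k:ℝ)+1))) * (x^n * (1-x)^n) := by
    rw [intervalIntegral.integral_of_le (by norm_num : (0:ℝ) ≤ 1)]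
    congr 1
    funext x
    rw [mul_pow, mul_pow]
    ring
  rw [h1, intervalIntegral.integral_const_mul, beta_nat]
  have hC : ((2*n).choose n : ℝ) * (n.factorial * n.factorial) = (2*n).factorial := by
    have := Nat.choose_mul_factorial_mul_factorial (show n ≤ 2*n by omega)
    have h2 : 2*n - n = n := by omega
    rw [h2] at this
    exact_mod_cast congrArg (Nat.cast : ℕ → ℝ) (by rw [← this]; ring)
  have hfact : ((n + n + 1).factorial : ℝ) = ((2*n).factorial : ℝ) * (2*(k:ℝ)+3) := by
    have h3 : n + n + 1 = (2*n) + 1 := by omega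
    rw [h3, Nat.factorial_succ]
    push_cast [hn]
    ring
  have hCpos : (0:ℝ) < ((2*n).choose n : ℝ) := by
    exact_mod_cast Nat.choose_pos (show n ≤ 2*n by omega)
  have hfpos : (0:ℝ) < (n.factorial : ℝ) := by exact_mod_cast n.factorial_pos
  have h2npos : (0:ℝ) < ((2*n).factorial : ℝ) := by exact_mod_cast (2*n).factorial_pos
  rw [hfact]
  have hk1 : (0:ℝ) < (k:ℝ) + 1 := by positivity
  have hn' : ((2 * (k + 1)).choose (k+1) : ℝ) = ((2*n).choose n : ℝ) := by rw [hn]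
  rw [hn']
  push_cast [hn]
  rw [hn] at hC
  field_simp
  rw [div_eq_iff (by rw [hn']; exact hCpos.ne')]
  linear_combination (-(2*(k:ℝ)+3)) * hC

noncomputable def Fser (k : ℕ) (x : ℝ) : ℝ := (2*x*(1-x))^(k+1) / (2*((k:ℝ)+1))

lemma Fser_int (k : ℕ) : Integrable (Fser k) (volume.restrict (Set.Ioc (0:ℝ) 1)) := by
  apply Continuous.integrableOn_Ioc
  unfold Fser
  fun_prop

lemma Fser_bound (k : ℕ) {x : ℝ} (hx : x ∈ Set.Ioc (0:ℝ) 1) : ‖Fser k x‖ ≤ (1/2)^(k+1) := by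
  obtain ⟨hy0, hy2⟩ := y_bounds hx
  unfold Fser
  rw [Real.norm_eq_abs, abs_div, abs_of_nonneg (pow_nonneg hy0 _),
    abs_of_nonneg (by positivity : (0:ℝ) ≤ 2*((k:ℝ)+1))]
  calc (2*x*(1-x))^(k+1) / (2*((k:ℝ)+1)) ≤ (2*x*(1-x))^(k+1) :=
        div_le_self (pow_nonneg hy0 _) (by push_cast; linarith [Nat.cast_nonneg (α := ℝ) k])
    _ ≤ (1/2)^(k+1) := pow_le_pow_left₀ hy0 hy2 _

lemma Fser_tsum {x : ℝ} (hx : x ∈ Set.Ioc (0:ℝ) 1) :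
    (∑' k, Fser k x) = -(1/2) * Real.log (2*x^2 - 2*x + 1) := by
  obtain ⟨hy0, hy2⟩ := y_bounds hx
  have habs : |2*x*(1-x)| < 1 := by rw [abs_of_nonneg hy0]; linarith
  have h := (hasSum_pow_div_log_of_abs_lt_one habs).div_const 2
  have hq : (1 : ℝ) - 2*x*(1-x) = 2*x^2 - 2*x + 1 := by ring
  rw [hq] at h
  have h' : HasSum (fun k => Fser k x) (-Real.log (2*x^2 - 2*x + 1) / 2) := by
    convert h using 2 with k
    · rfl
    unfold Fser
    rw [div_div, mul_comm ((k:ℝ)+1) 2]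
  rw [h'.tsum_eq]
  ring

theorem inv_central_binom_series_pi :
    HasSum
      (fun k : ℕ =>
        (2 : ℝ) ^ (k + 1) /
          ((Nat.choose (2 * (k + 1)) (k + 1) : ℝ) * (2 * ((k : ℝ) + 1)) *
            (2 * ((k : ℝ) + 1) + 1)))
      (1 - Real.pi / 4) := by
  have hμ : (volume (Set.Ioc (0:ℝ) 1)).toReal = 1 := by simp
  have hF_sum : Summable fun k => ∫ x in Set.Ioc (0:ℝ) 1, ‖Fser k x‖ := by
    have hgeo : Summable fun k : ℕ => ((1:ℝ)/2)^(k+1) := by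
      simpa [pow_succ'] using summable_geometric_two.mul_left (1/2:ℝ)
    apply Summable.of_nonneg_of_le (fun k => integral_nonneg fun x => norm_nonneg _)
      (fun k => ?_) hgeo
    calc ∫ x in Set.Ioc (0:ℝ) 1, ‖Fser k x‖
        ≤ ∫ _x in Set.Ioc (0:ℝ) 1, ((1:ℝ)/2)^(k+1) := by
          apply setIntegral_mono_on (Fser_int k).norm
            (integrableOn_const (by simp)) measurableSet_Ioc
          exact fun x hx => Fser_bound k hx
      _ = (1/2)^(k+1) := by rw [setIntegral_const, measureReal_def, hμ, one_smul]
  have hsum := MeasureTheory.hasSum_integral_of_summable_integral_norm Fser_int hF_sum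
  have hint_eq : (∫ x in Set.Ioc (0:ℝ) 1, ∑' k, Fser k x) = 1 - Real.pi/4 := by
    rw [setIntegral_congr_fun measurableSet_Ioc (fun x hx => Fser_tsum hx),
      ← intervalIntegral.integral_of_le (by norm_num : (0:ℝ) ≤ 1)]
    exact log_integral
  rw [hint_eq] at hsum
  convert hsum using 1
  · rfl
  funext k
  exact term_eq k
end

section
/- The infinite series Σ_{k=0}^{∞} binom(2k,k) / (8^k · (2k+3)) converges and equals (√2/4)·(π - 2). -/
open Finset MeasureTheory


lemma desc_half (n : ℕ) : (descPochhammer ℤ n).smeval (-(1/2):ℝ) =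
    (-1)^n * Nat.centralBinom n * n.factorial / 4^n := by
  induction n with
  | zero => simp [Nat.centralBinom]
  | succ n ih =>
    have hcb : ((n:ℝ)+1) * (Nat.centralBinom (n+1)) = (2*(2*n+1)) * Nat.centralBinom n := by
      exact_mod_cast congrArg (Nat.cast (R := ℝ)) (Nat.succ_mul_centralBinom_succ n)
    rw [descPochhammer_succ_right, Polynomial.smeval_mul, ih,
      Polynomial.smeval_sub, Polynomial.smeval_X, Polynomial.smeval_natCast]
    have hfac : ((n+1).factorial : ℝ) = (n+1) * n.factorial := by
      push_cast [Nat.factorial_succ]; ring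
    have h4 : (4:ℝ)^(n+1) = 4 * 4^n := by ring
    have hn1 : ((n:ℝ)+1) ≠ 0 := by positivity
    have hcb' : ((Nat.centralBinom (n+1) : ℝ)) = (2*(2*n+1)) * Nat.centralBinom n / ((n:ℝ)+1) := by
      field_simp at hcb ⊢; linarith [hcb]
    rw [hcb', hfac, h4]
    field_simp
    ring
lemma desc_neg_one (n : ℕ) : (descPochhammer ℤ n).smeval (-1:ℝ) = (-1)^n * n.factorial := by
  induction n with
  | zero => simp
  | succ n ih =>
    rw [descPochhammer_succ_right, Polynomial.smeval_mul, ih,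
      Polynomial.smeval_sub, Polynomial.smeval_X, Polynomial.smeval_natCast]
    push_cast [Nat.factorial_succ]
    ring

lemma ring_choose_half (n : ℕ) : Ring.choose (-(1/2):ℝ) n = (-1)^n * Nat.centralBinom n / 4^n := by
  have h := Ring.descPochhammer_eq_factorial_smul_choose (R := ℝ) (-(1/2)) n
  rw [desc_half, nsmul_eq_mul] at h
  have hf : (n.factorial : ℝ) ≠ 0 := by exact_mod_cast n.factorial_ne_zero
  refine mul_left_cancel₀ hf ?_
  rw [← h]
  field_simp

lemma ring_choose_neg_one (n : ℕ) : Ring.choose (-1:ℝ) n = (-1)^n := by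
  have h := Ring.descPochhammer_eq_factorial_smul_choose (R := ℝ) (-1) n
  rw [desc_neg_one, nsmul_eq_mul] at h
  have hf : (n.factorial : ℝ) ≠ 0 := by exact_mod_cast n.factorial_ne_zero
  refine mul_left_cancel₀ hf ?_
  rw [← h]
  ring

lemma conv_identity (n : ℕ) :
    ∑ ij ∈ antidiagonal n,
      (Nat.centralBinom ij.1 : ℝ)/4^ij.1 * ((Nat.centralBinom ij.2 : ℝ)/4^ij.2) = 1 := by
  have h := Ring.add_choose_eq (R := ℝ) (r := -(1/2)) (s := -(1/2)) n (Commute.all _ _)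
  have h1 : (-(1/2) + -(1/2) : ℝ) = -1 := by norm_num
  rw [h1, ring_choose_neg_one] at h
  simp only [ring_choose_half] at h
  have hc : ∀ ij ∈ antidiagonal n,
      ((-1:ℝ))^ij.1 * Nat.centralBinom ij.1 / 4^ij.1 * ((-1)^ij.2 * Nat.centralBinom ij.2 / 4^ij.2)
      = (-1)^n * ((Nat.centralBinom ij.1 : ℝ)/4^ij.1 * ((Nat.centralBinom ij.2 : ℝ)/4^ij.2)) := by
    intro ij hij
    rw [HasAntidiagonal.mem_antidiagonal] at hij
    rw [← hij, pow_add]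
    ring
  rw [sum_congr rfl hc, ← mul_sum] at h
  have hm : ((-1:ℝ))^n ≠ 0 := by
    apply pow_ne_zero; norm_num
  refine mul_left_cancel₀ hm ?_
  rw [mul_one]
  exact h.symm
lemma cb_le_four_pow (k : ℕ) : (Nat.centralBinom k : ℝ) ≤ 4^k := by
  have h : Nat.centralBinom k ≤ 4^k := by
    have h1 : Nat.centralBinom k ≤ ∑ j ∈ range (2*k+1), (2*k).choose j :=
      single_le_sum (f := fun j => (2*k).choose j) (fun i _ => Nat.zero_le _)
        (mem_range.2 (by omega))
    rw [Nat.sum_range_choose] at h1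
    calc Nat.centralBinom k ≤ 2^(2*k) := h1
    _ = 4^k := by rw [pow_mul]; norm_num
  exact_mod_cast h

lemma cb_summable {x : ℝ} (hx0 : 0 ≤ x) (hx : x < 1/4) :
    Summable (fun k => (Nat.centralBinom k : ℝ) * x^k) := by
  refine Summable.of_nonneg_of_le (fun k => by positivity) (fun k => ?_)
    (summable_geometric_of_lt_one (by positivity) (by linarith : 4*x < 1))
  rw [mul_pow]
  exact mul_le_mul_of_nonneg_right (cb_le_four_pow k) (pow_nonneg hx0 k)

lemma gen_fun {x : ℝ} (hx0 : 0 ≤ x) (hx : x < 1/4) :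
    HasSum (fun k => (Nat.centralBinom k : ℝ) * x^k) (Real.sqrt (1-4*x))⁻¹ := by
  have hs := cb_summable hx0 hx
  set S := ∑' k, (Nat.centralBinom k : ℝ) * x^k with hS
  have hnorm : Summable (fun k => ‖(Nat.centralBinom k : ℝ) * x^k‖) :=
    summable_norm_iff.mpr hs
  have hcauchy := tsum_mul_tsum_eq_tsum_sum_antidiagonal_of_summable_norm hnorm hnorm
  -- S * S = ∑' n, Σ_{antidiagonal} cb i x^i * cb j x^j
  have hterm : ∀ n : ℕ, ∑ ij ∈ antidiagonal n,
      ((Nat.centralBinom ij.1 : ℝ) * x^ij.1) * ((Nat.centralBinom ij.2 : ℝ) * x^ij.2)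
      = (4*x)^n := by
    intro n
    have := conv_identity n
    calc ∑ ij ∈ antidiagonal n,
        ((Nat.centralBinom ij.1 : ℝ) * x^ij.1) * ((Nat.centralBinom ij.2 : ℝ) * x^ij.2)
        = ∑ ij ∈ antidiagonal n, ((Nat.centralBinom ij.1 : ℝ)/4^ij.1 *
            ((Nat.centralBinom ij.2 : ℝ)/4^ij.2)) * (4*x)^n := by
          refine sum_congr rfl (fun ij hij => ?_)
          rw [HasAntidiagonal.mem_antidiagonal] at hij
          rw [← hij, mul_pow, pow_add, pow_add]
          field_simp
      _ = (4*x)^n := by rw [← sum_mul, conv_identity n, one_mul]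
  have hSS : S * S = (1 - 4*x)⁻¹ := by
    rw [hS, hcauchy, tsum_congr hterm]
    exact tsum_geometric_of_lt_one (by positivity) (by linarith)
  have hSpos : 0 ≤ S := tsum_nonneg (fun k => by positivity)
  have h1 : (0:ℝ) < 1 - 4*x := by linarith
  have hSval : S = (Real.sqrt (1-4*x))⁻¹ := by
    have : S = Real.sqrt (S * S) := by rw [Real.sqrt_mul_self hSpos]
    rw [this, hSS, Real.sqrt_inv]
  exact hSval ▸ hs.hasSum
lemma sqrt_term_pos {x : ℝ} (hx : x ∈ Set.Icc (0:ℝ) 1) : (0:ℝ) < 1 - x^2/2 := by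
  obtain ⟨h0, h1⟩ := hx
  nlinarith

lemma deriv_G {x : ℝ} (hx : x ∈ Set.Icc (0:ℝ) 1) :
    HasDerivAt (fun t => Real.sqrt 2 * Real.arcsin (t / Real.sqrt 2) - t * Real.sqrt (1 - t^2/2))
      (x^2 * (Real.sqrt (1 - x^2/2))⁻¹) x := by
  obtain ⟨h0, h1⟩ := hx
  have h2pos : (0:ℝ) < Real.sqrt 2 := Real.sqrt_pos.mpr (by norm_num)
  have hq : (0:ℝ) < 1 - x^2/2 := sqrt_term_pos ⟨h0, h1⟩
  set s := Real.sqrt (1 - x^2/2) with hs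
  have hspos : 0 < s := Real.sqrt_pos.mpr hq
  have hs2 : s^2 = 1 - x^2/2 := Real.sq_sqrt hq.le
  have hxd : x / Real.sqrt 2 ≠ -1 := by
    have h := div_nonneg h0 h2pos.le
    intro hc; rw [hc] at h; linarith
  have hxd1 : x / Real.sqrt 2 ≠ 1 := by
    have h2gt1 : (1:ℝ) < Real.sqrt 2 := by
      have := Real.lt_sqrt (x := 1) (y := 2) (by norm_num)
      simpa using this.mpr (by norm_num)
    have : x / Real.sqrt 2 < 1 := by
      rw [div_lt_one h2pos]; linarith
    exact this.ne
  have hinner : HasDerivAt (fun t : ℝ => t / Real.sqrt 2) ((Real.sqrt 2)⁻¹) x := by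
    simpa using (hasDerivAt_id x).div_const (Real.sqrt 2)
  have harc : HasDerivAt (fun t => Real.arcsin (t / Real.sqrt 2))
      (1 / Real.sqrt (1 - (x / Real.sqrt 2)^2) * (Real.sqrt 2)⁻¹) x :=
    HasDerivAt.comp x (Real.hasDerivAt_arcsin hxd hxd1) hinner
  have hsq2 : Real.sqrt (1 - (x / Real.sqrt 2)^2) = s := by
    rw [div_pow, Real.sq_sqrt (by norm_num : (0:ℝ) ≤ 2)]
  rw [hsq2] at harc
  have hinner2 : HasDerivAt (fun t : ℝ => 1 - t^2/2) (-x) x := by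
    have h := ((hasDerivAt_pow 2 x).div_const 2).const_sub 1
    simpa using h
  have hsqrt : HasDerivAt (fun t => Real.sqrt (1 - t^2/2)) (-x / (2 * s)) x := by
    have h := (Real.hasDerivAt_sqrt hq.ne').comp x hinner2
    simpa [hs, mul_comm, div_eq_mul_inv, Function.comp_def] using h
  have hprod : HasDerivAt (fun t => t * Real.sqrt (1 - t^2/2))
      (1 * s + x * (-x / (2*s))) x := (hasDerivAt_id x).mul hsqrt
  have htotal := (harc.const_mul (Real.sqrt 2)).sub hprod
  refine htotal.congr_deriv ?_
  have hs0 : s ≠ 0 := hspos.ne'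
  have h20 : Real.sqrt 2 ≠ 0 := h2pos.ne'
  field_simp
  ring_nf
  linear_combination (-2) * hs2

lemma integral_val :
    ∫ t in (0:ℝ)..1, t^2 * (Real.sqrt (1 - t^2/2))⁻¹ = Real.sqrt 2 / 4 * (Real.pi - 2) := by
  have h01 : (0:ℝ) ≤ 1 := by norm_num
  have huIcc : Set.uIcc (0:ℝ) 1 = Set.Icc 0 1 := Set.uIcc_of_le h01
  have hcont : ContinuousOn (fun t : ℝ => t^2 * (Real.sqrt (1 - t^2/2))⁻¹) (Set.Icc 0 1) := by
    apply ContinuousOn.mul (continuous_pow 2).continuousOn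
    apply ContinuousOn.inv₀
    · exact (Real.continuous_sqrt.comp (by continuity)).continuousOn
    · intro x hx
      exact (Real.sqrt_pos.mpr (sqrt_term_pos hx)).ne'
  have hFTC := intervalIntegral.integral_eq_sub_of_hasDerivAt
    (f := fun t => Real.sqrt 2 * Real.arcsin (t / Real.sqrt 2) - t * Real.sqrt (1 - t^2/2))
    (fun x hx => deriv_G (huIcc ▸ hx))
    ((hcont.mono (by rw [huIcc])).intervalIntegrable)
  rw [hFTC]
  have h2pos : (0:ℝ) < Real.sqrt 2 := Real.sqrt_pos.mpr (by norm_num)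
  have hss : Real.sqrt 2 * Real.sqrt 2 = 2 := Real.mul_self_sqrt (by norm_num)
  have harcsin : Real.arcsin (1 / Real.sqrt 2) = Real.pi / 4 := by
    apply Real.arcsin_eq_of_sin_eq
    · rw [Real.sin_pi_div_four, div_eq_div_iff (by norm_num) h2pos.ne']
      linarith [hss]
    · constructor
      · linarith [Real.pi_pos]
      · linarith [Real.pi_pos]
  have hsqhalf : Real.sqrt (1 - 1^2/2) = (Real.sqrt 2)⁻¹ := by
    rw [show (1:ℝ) - 1^2/2 = 2⁻¹ by norm_num, Real.sqrt_inv]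
  have hinv : (Real.sqrt 2)⁻¹ = Real.sqrt 2 / 2 := by
    rw [eq_div_iff (by norm_num : (2:ℝ) ≠ 0), inv_mul_eq_div, div_eq_iff h2pos.ne']
    linarith [hss]
  simp only [harcsin, hsqhalf, zero_div, Real.arcsin_zero, mul_zero, zero_mul, sub_zero]
  rw [hinv]
  ring
theorem central_binom_series_pi_minus_two :
    HasSum
      (fun k : ℕ =>
        (Nat.choose (2 * k) k : ℝ) / (8 ^ k * (2 * (k : ℝ) + 3)))
      (Real.sqrt 2 / 4 * (Real.pi - 2)) := by
  have h01 : (0:ℝ) ≤ 1 := by norm_num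
  set F : ℕ → ℝ → ℝ := fun k t => (Nat.centralBinom k : ℝ)/8^k * t^(2*k+2) with hF
  have hFcont : ∀ k, Continuous (F k) := by
    intro k; apply Continuous.mul continuous_const (continuous_pow _)
  have hFint : ∀ k, Integrable (F k) (volume.restrict (Set.Ioc (0:ℝ) 1)) := fun k =>
    (hFcont k).integrableOn_Ioc
  have hval : ∀ k : ℕ, ∫ t in Set.Ioc (0:ℝ) 1, F k t
      = (Nat.choose (2*k) k : ℝ) / (8 ^ k * (2 * (k:ℝ) + 3)) := by
    intro k
    rw [← intervalIntegral.integral_of_le h01, hF]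
    simp only
    rw [intervalIntegral.integral_const_mul, integral_pow]
    rw [one_pow, zero_pow (by omega), ← Nat.centralBinom_eq_two_mul_choose]
    push_cast
    have h8 : (8:ℝ)^k ≠ 0 := by positivity
    have hd : (2*(k:ℝ)+2+1) ≠ 0 := by positivity
    field_simp
    ring
  have hnormval : ∀ k : ℕ, (∫ t in Set.Ioc (0:ℝ) 1, ‖F k t‖)
      = (Nat.choose (2*k) k : ℝ) / (8 ^ k * (2 * (k:ℝ) + 3)) := by
    intro k
    rw [← hval k]
    apply setIntegral_congr_fun measurableSet_Ioc
    intro t ht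
    refine Real.norm_of_nonneg ?_
    simp only [hF]
    exact mul_nonneg (by positivity) (pow_nonneg ht.1.le _)
  have hsummable : Summable (fun k : ℕ => (Nat.choose (2*k) k : ℝ) / (8 ^ k * (2 * (k:ℝ) + 3))) := by
    refine Summable.of_nonneg_of_le (fun k => by positivity) (fun k => ?_)
      (summable_geometric_of_lt_one (by norm_num : (0:ℝ) ≤ 1/2) (by norm_num))
    have hcb : (Nat.choose (2*k) k : ℝ) ≤ 4^k := by
      rw [← Nat.centralBinom_eq_two_mul_choose]; exact cb_le_four_pow k
    have hd : (1:ℝ) ≤ 2*(k:ℝ)+3 := by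
      have : (0:ℝ) ≤ (k:ℝ) := Nat.cast_nonneg k
      linarith
    have h8 : (0:ℝ) < 8^k := by positivity
    calc (Nat.choose (2*k) k : ℝ) / (8 ^ k * (2 * (k:ℝ) + 3))
        ≤ (4:ℝ)^k / (8^k * 1) := by
          apply div_le_div₀ (by positivity) hcb (by positivity)
          apply mul_le_mul_of_nonneg_left hd h8.le
      _ = (1/2:ℝ)^k := by
          rw [mul_one, ← div_pow]
          norm_num
  have hsum_norm : Summable (fun k : ℕ => ∫ t in Set.Ioc (0:ℝ) 1, ‖F k t‖) := by
    exact (funext hnormval : _) ▸ hsummable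
  have key := hasSum_integral_of_summable_integral_norm hFint hsum_norm
  have hpt : ∀ t ∈ Set.Ioc (0:ℝ) 1, (∑' k, F k t) = t^2 * (Real.sqrt (1-t^2/2))⁻¹ := by
    intro t ht
    obtain ⟨ht0, ht1⟩ := ht
    have hx0 : (0:ℝ) ≤ t^2/8 := by positivity
    have hx : t^2/8 < 1/4 := by nlinarith
    have hg := (gen_fun hx0 hx).mul_left (t^2)
    have heq : (fun k => t^2 * ((Nat.centralBinom k : ℝ) * (t^2/8)^k)) = fun k => F k t := by
      funext k
      rw [hF]
      simp only
      rw [pow_add, pow_mul]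
      have h8 : (8:ℝ)^k ≠ 0 := by positivity
      field_simp
      rw [mul_assoc, ← mul_pow]; norm_num
    rw [heq] at hg
    have hv : 1 - 4*(t^2/8) = 1 - t^2/2 := by ring
    rw [hv] at hg
    exact hg.tsum_eq
  rw [setIntegral_congr_fun measurableSet_Ioc hpt, ← intervalIntegral.integral_of_le h01,
    integral_val] at key
  exact (funext hval : _) ▸ key
end
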